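/- Let I be an operator ideal. Then: (i) every I-compact subset of a Banach space is norm compact (in particular norm bounded); (ii) for every Banach space E and every x ∈ E, the singleton {x} is I-compact, i.e., {x} ∈ K_I(E); (iii) if B ∈ K_I(E) and u ∈ L(E;F), then u(B) ∈ K_I(F). Consequently, the topology τ_{K_I} of uniform convergence on I-compact sets is an ideal topology: for every operator ideal J, the assignment (E,F) ↦ (τ_{K_I}-closure of J(E;F) in L(E;F)) is again an operator ideal. -/

import Mathlib

open Filter Topology Metric Set Pointwise

universe u

variable (𝕜 : Type u) [RCLike 𝕜]

/-- An assignment, to each pair of Banach spaces over `𝕜`, of a set of bounded linear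
operators between them. -/
abbrev BanachOpClass (𝕜 : Type u) [RCLike 𝕜] : Type (u + 1) :=
  ∀ (E F : Type u) [NormedAddCommGroup E] [NormedSpace 𝕜 E] [CompleteSpace E]
    [NormedAddCommGroup F] [NormedSpace 𝕜 F] [CompleteSpace F], Set (E →L[𝕜] F)

/-- A bounded linear operator has finite rank if its range is finite dimensional. -/
def IsFiniteRankOp {E F : Type u} [NormedAddCommGroup E] [NormedSpace 𝕜 E]
    [NormedAddCommGroup F] [NormedSpace 𝕜 F] (u : E →L[𝕜] F) : Prop :=
  FiniteDimensional 𝕜 (LinearMap.range (u : E →ₗ[𝕜] F))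

/-- Operator ideals in the sense of Pietsch. -/
structure IsOperatorIdeal (C : BanachOpClass 𝕜) : Prop where
  smul_mem : ∀ (E F : Type u) [NormedAddCommGroup E] [NormedSpace 𝕜 E] [CompleteSpace E]
    [NormedAddCommGroup F] [NormedSpace 𝕜 F] [CompleteSpace F]
    (a : 𝕜) (u : E →L[𝕜] F), u ∈ C E F → a • u ∈ C E F
  add_mem : ∀ (E F : Type u) [NormedAddCommGroup E] [NormedSpace 𝕜 E] [CompleteSpace E]
    [NormedAddCommGroup F] [NormedSpace 𝕜 F] [CompleteSpace F]
    (u v : E →L[𝕜] F), u ∈ C E F → v ∈ C E F → u + v ∈ C E F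
  finiteRank_mem : ∀ (E F : Type u) [NormedAddCommGroup E] [NormedSpace 𝕜 E] [CompleteSpace E]
    [NormedAddCommGroup F] [NormedSpace 𝕜 F] [CompleteSpace F]
    (u : E →L[𝕜] F), IsFiniteRankOp 𝕜 u → u ∈ C E F
  comp_mem : ∀ (E F G H : Type u)
    [NormedAddCommGroup E] [NormedSpace 𝕜 E] [CompleteSpace E]
    [NormedAddCommGroup F] [NormedSpace 𝕜 F] [CompleteSpace F]
    [NormedAddCommGroup G] [NormedSpace 𝕜 G] [CompleteSpace G]
    [NormedAddCommGroup H] [NormedSpace 𝕜 H] [CompleteSpace H]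
    (u : E →L[𝕜] F) (v : F →L[𝕜] G) (w : G →L[𝕜] H),
    v ∈ C F G → w.comp (v.comp u) ∈ C E H

/-- An assignment of a topology to each space of bounded operators between Banach spaces. -/
abbrev OpTopologyAssignment (𝕜 : Type u) [RCLike 𝕜] : Type (u + 1) :=
  ∀ (E F : Type u) [NormedAddCommGroup E] [NormedSpace 𝕜 E] [CompleteSpace E]
    [NormedAddCommGroup F] [NormedSpace 𝕜 F] [CompleteSpace F],
    TopologicalSpace (E →L[𝕜] F)

/-- The closure of an operator class with respect to an assignment of topologies. -/
def closureClass (τ : OpTopologyAssignment 𝕜) (C : BanachOpClass 𝕜) (E F : Type u)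
    [NormedAddCommGroup E] [NormedSpace 𝕜 E] [CompleteSpace E]
    [NormedAddCommGroup F] [NormedSpace 𝕜 F] [CompleteSpace F] : Set (E →L[𝕜] F) :=
  @closure _ (τ E F) (C E F)

/-- An ideal topology: a linear topology on each operator space such that the closure of
any operator ideal is again an operator ideal. -/
structure IsIdealTopology (τ : OpTopologyAssignment 𝕜) : Prop where
  topologicalAddGroup : ∀ (E F : Type u)
    [NormedAddCommGroup E] [NormedSpace 𝕜 E] [CompleteSpace E]
    [NormedAddCommGroup F] [NormedSpace 𝕜 F] [CompleteSpace F],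
    @IsTopologicalAddGroup (E →L[𝕜] F) (τ E F) _
  continuousSMul : ∀ (E F : Type u)
    [NormedAddCommGroup E] [NormedSpace 𝕜 E] [CompleteSpace E]
    [NormedAddCommGroup F] [NormedSpace 𝕜 F] [CompleteSpace F],
    @ContinuousSMul 𝕜 (E →L[𝕜] F) _ _ (τ E F)
  closure_isOperatorIdeal : ∀ C : BanachOpClass 𝕜,
    IsOperatorIdeal 𝕜 C → IsOperatorIdeal 𝕜 (closureClass 𝕜 τ C)

/-- A Banach space `E` has the `(I, J, τ)`-approximation property if `I(F;E)` is contained in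
the `τ`-closure of `J(F;E)` for every Banach space `F`. -/
def HasAP (I J : BanachOpClass 𝕜) (τ : OpTopologyAssignment 𝕜)
    (E : Type u) [NormedAddCommGroup E] [NormedSpace 𝕜 E] [CompleteSpace E] : Prop :=
  ∀ (F : Type u) [NormedAddCommGroup F] [NormedSpace 𝕜 F] [CompleteSpace F],
    I F E ⊆ @closure _ (τ F E) (J F E)

/-- A Banach space `E` has the `(I, J, τ)`-weak approximation property if `I(E;E)` is contained
in the `τ`-closure of `J(E;E)`. -/
def HasWAP (I J : BanachOpClass 𝕜) (τ : OpTopologyAssignment 𝕜)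
    (E : Type u) [NormedAddCommGroup E] [NormedSpace 𝕜 E] [CompleteSpace E] : Prop :=
  I E E ⊆ @closure _ (τ E E) (J E E)

/-- The topology on `E →L[𝕜] F` of uniform convergence on the sets of the family `𝔖`. -/
def uniformOnTop (E F : Type u) [NormedAddCommGroup E] [NormedSpace 𝕜 E] [CompleteSpace E]
    [NormedAddCommGroup F] [NormedSpace 𝕜 F] [CompleteSpace F] (𝔖 : Set (Set E)) :
    TopologicalSpace (E →L[𝕜] F) :=
  TopologicalSpace.induced (fun u => UniformOnFun.ofFun 𝔖 (⇑u))
    (UniformOnFun.topologicalSpace E F 𝔖)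

/-- The operator norm topology on each space of operators. -/
def normTopology (E F : Type u)
    [NormedAddCommGroup E] [NormedSpace 𝕜 E] [CompleteSpace E]
    [NormedAddCommGroup F] [NormedSpace 𝕜 F] [CompleteSpace F] :
    TopologicalSpace (E →L[𝕜] F) := inferInstance

/-- The topology of pointwise convergence (uniform convergence on finite sets; the strong
operator topology). -/
def ptwiseTopology (E F : Type u)
    [NormedAddCommGroup E] [NormedSpace 𝕜 E] [CompleteSpace E]
    [NormedAddCommGroup F] [NormedSpace 𝕜 F] [CompleteSpace F] :
    TopologicalSpace (E →L[𝕜] F) := uniformOnTop 𝕜 E F {s : Set E | s.Finite}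

/-- The compact-open topology: uniform convergence on compact sets. -/
def compactOpenTopology (E F : Type u)
    [NormedAddCommGroup E] [NormedSpace 𝕜 E] [CompleteSpace E]
    [NormedAddCommGroup F] [NormedSpace 𝕜 F] [CompleteSpace F] :
    TopologicalSpace (E →L[𝕜] F) := uniformOnTop 𝕜 E F {K : Set E | IsCompact K}

/-- An assignment of a family of subsets to each Banach space. -/
abbrev SetFamilyAssignment (𝕜 : Type u) [RCLike 𝕜] : Type (u + 1) :=
  ∀ (E : Type u) [NormedAddCommGroup E] [NormedSpace 𝕜 E] [CompleteSpace E], Set (Set E)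

/-- The topology of uniform convergence on the sets of the family `𝒜 E`. -/
def famTopology (𝒜 : SetFamilyAssignment 𝕜) (E F : Type u)
    [NormedAddCommGroup E] [NormedSpace 𝕜 E] [CompleteSpace E]
    [NormedAddCommGroup F] [NormedSpace 𝕜 F] [CompleteSpace F] :
    TopologicalSpace (E →L[𝕜] F) := uniformOnTop 𝕜 E F (𝒜 E)

/-- The class of finite rank bounded operators. -/
def finRankClass (E F : Type u)
    [NormedAddCommGroup E] [NormedSpace 𝕜 E] [CompleteSpace E]
    [NormedAddCommGroup F] [NormedSpace 𝕜 F] [CompleteSpace F] : Set (E →L[𝕜] F) :=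
  {u | IsFiniteRankOp 𝕜 u}

/-- The class of compact operators: those mapping the closed unit ball to a relatively
compact set. -/
def compactClass (E F : Type u)
    [NormedAddCommGroup E] [NormedSpace 𝕜 E] [CompleteSpace E]
    [NormedAddCommGroup F] [NormedSpace 𝕜 F] [CompleteSpace F] : Set (E →L[𝕜] F) :=
  {u | IsCompact (closure (⇑u '' Metric.closedBall 0 1))}

/-- The class of all bounded operators. -/
def boundedClass (E F : Type u)
    [NormedAddCommGroup E] [NormedSpace 𝕜 E] [CompleteSpace E]
    [NormedAddCommGroup F] [NormedSpace 𝕜 F] [CompleteSpace F] : Set (E →L[𝕜] F) :=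
  Set.univ

/-- A witness that `A` is an `I`-bounded subset of `E`: a Banach space `F` and an operator
`u ∈ I(F;E)` with `A ⊆ u(B_F)`. -/
structure IBddWitness (C : BanachOpClass 𝕜) (E : Type u) [NormedAddCommGroup E]
    [NormedSpace 𝕜 E] [CompleteSpace E] (A : Set E) : Type (u + 1) where
  F : Type u
  [iG : NormedAddCommGroup F]
  [iS : NormedSpace 𝕜 F]
  [iC : CompleteSpace F]
  u : F →L[𝕜] E
  hu : u ∈ C F E
  hA : A ⊆ ⇑u '' Metric.closedBall 0 1

/-- `C_I(E)`: the `I`-bounded subsets of `E`. -/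
def IBddSets (C : BanachOpClass 𝕜) (E : Type u) [NormedAddCommGroup E]
    [NormedSpace 𝕜 E] [CompleteSpace E] : Set (Set E) :=
  {A | Nonempty (IBddWitness 𝕜 C E A)}

/-- The topology `τ_{C_I}` of uniform convergence on `I`-bounded sets. -/
def iBddTopology (C : BanachOpClass 𝕜) (E F : Type u)
    [NormedAddCommGroup E] [NormedSpace 𝕜 E] [CompleteSpace E]
    [NormedAddCommGroup F] [NormedSpace 𝕜 F] [CompleteSpace F] :
    TopologicalSpace (E →L[𝕜] F) := uniformOnTop 𝕜 E F (IBddSets 𝕜 C E)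

/-- `L_I`: the class of `I`-bounded operators, i.e. those mapping the closed unit ball
to an `I`-bounded set. -/
def LBddClass (C : BanachOpClass 𝕜) (E F : Type u)
    [NormedAddCommGroup E] [NormedSpace 𝕜 E] [CompleteSpace E]
    [NormedAddCommGroup F] [NormedSpace 𝕜 F] [CompleteSpace F] : Set (E →L[𝕜] F) :=
  {T | ⇑T '' Metric.closedBall 0 1 ∈ IBddSets 𝕜 C F}

/-- A witness that `B` is an `I`-compact subset of `E`. -/
structure ICptWitness (C : BanachOpClass 𝕜) (E : Type u) [NormedAddCommGroup E]
    [NormedSpace 𝕜 E] [CompleteSpace E] (B : Set E) : Type (u + 1) where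
  F : Type u
  [iG : NormedAddCommGroup F]
  [iS : NormedSpace 𝕜 F]
  [iC : CompleteSpace F]
  K : Set F
  hK : IsCompact K
  u : F →L[𝕜] E
  hu : u ∈ C F E
  A : Set E
  hA : A ⊆ ⇑u '' K
  hB : B = closure A

/-- `K_I(E)`: the `I`-compact subsets of `E`. -/
def ICptSets (C : BanachOpClass 𝕜) (E : Type u) [NormedAddCommGroup E]
    [NormedSpace 𝕜 E] [CompleteSpace E] : Set (Set E) :=
  {B | Nonempty (ICptWitness 𝕜 C E B)}

/-- The topology `τ_{K_I}` of uniform convergence on `I`-compact sets. -/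
def iCptTopology (C : BanachOpClass 𝕜) (E F : Type u)
    [NormedAddCommGroup E] [NormedSpace 𝕜 E] [CompleteSpace E]
    [NormedAddCommGroup F] [NormedSpace 𝕜 F] [CompleteSpace F] :
    TopologicalSpace (E →L[𝕜] F) := uniformOnTop 𝕜 E F (ICptSets 𝕜 C E)

/-- The absolutely convex hull of the terms of a sequence: all finite sums `Σ λᵢ • x_{nᵢ}`
with `Σ ‖λᵢ‖ ≤ 1`. -/
def absConvexHullSeq {E : Type u} [NormedAddCommGroup E] [NormedSpace 𝕜 E]
    (x : ℕ → E) : Set E :=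
  {y | ∃ (m : ℕ) (lam : Fin m → 𝕜) (idx : Fin m → ℕ),
    (∑ i, ‖lam i‖) ≤ 1 ∧ y = ∑ i, lam i • x (idx i)}

/-- `BR_q(E)`: the Bourgain–Reinov `q`-compact subsets of `E`. -/
def BRSets (q : ℝ) (E : Type u) [NormedAddCommGroup E] [NormedSpace 𝕜 E]
    [CompleteSpace E] : Set (Set E) :=
  {A | ∃ x : ℕ → E, Summable (fun n => ‖x n‖ ^ q) ∧ A ⊆ closure (absConvexHullSeq 𝕜 x)}

/-- The topology `τ_{BR_q}` of uniform convergence on Bourgain–Reinov `q`-compact sets. -/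
def brTopology (q : ℝ) (E F : Type u)
    [NormedAddCommGroup E] [NormedSpace 𝕜 E] [CompleteSpace E]
    [NormedAddCommGroup F] [NormedSpace 𝕜 F] [CompleteSpace F] :
    TopologicalSpace (E →L[𝕜] F) := uniformOnTop 𝕜 E F (BRSets 𝕜 q E)

/-- The Grothendieck property of an operator ideal. -/
def GrothendieckProperty (C : BanachOpClass 𝕜) : Prop :=
  ∀ (E : Type u) [NormedAddCommGroup E] [NormedSpace 𝕜 E] [CompleteSpace E] (A : Set E),
    Bornology.IsBounded A →
    (∀ ε : ℝ, 0 < ε → ∃ Aε ∈ IBddSets 𝕜 C E, A ⊆ Aε + Metric.closedBall (0 : E) ε) →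
    A ∈ IBddSets 𝕜 C E

/-- A witness that `T` factors as `T = R ∘ S` with `S` in the class `D` and `R` in the
class `C`, through some Banach space `Z`. -/
structure FactorWitness (D C : BanachOpClass 𝕜) (F E : Type u)
    [NormedAddCommGroup F] [NormedSpace 𝕜 F] [CompleteSpace F]
    [NormedAddCommGroup E] [NormedSpace 𝕜 E] [CompleteSpace E]
    (T : F →L[𝕜] E) : Type (u + 1) where
  Z : Type u
  [iG : NormedAddCommGroup Z]
  [iS : NormedSpace 𝕜 Z]
  [iC : CompleteSpace Z]
  S : F →L[𝕜] Z
  R : Z →L[𝕜] E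
  hS : S ∈ D F Z
  hR : R ∈ C Z E
  heq : T = R.comp S


section Statement13Aux

open UniformConvergence

variable {𝕜}

lemma icpt_isCompact {I : BanachOpClass 𝕜}
    {E : Type u} [NormedAddCommGroup E] [NormedSpace 𝕜 E] [CompleteSpace E]
    {B : Set E} (hB : B ∈ ICptSets 𝕜 I E) : IsCompact B := by
  obtain ⟨w⟩ := hB
  letI := w.iG; letI := w.iS; letI := w.iC
  have hcpt : IsCompact (⇑w.u '' w.K) := w.hK.image w.u.continuous
  have hBcl : B = closure w.A := w.hB
  rw [hBcl]
  exact hcpt.of_isClosed_subset isClosed_closure (closure_minimal w.hA hcpt.isClosed)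

lemma icpt_singleton (I : BanachOpClass 𝕜) (hI : IsOperatorIdeal 𝕜 I)
    (E : Type u) [NormedAddCommGroup E] [NormedSpace 𝕜 E] [CompleteSpace E] (x : E) :
    {x} ∈ ICptSets 𝕜 I E := by
  refine ⟨⟨𝕜, {(1 : 𝕜)}, isCompact_singleton, ContinuousLinearMap.toSpanSingleton 𝕜 x, ?_, {x}, ?_, ?_⟩⟩
  · refine hI.finiteRank_mem _ _ _ ?_
    have hle : LinearMap.range ((ContinuousLinearMap.toSpanSingleton 𝕜 x : 𝕜 →L[𝕜] E) : 𝕜 →ₗ[𝕜] E)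
        ≤ Submodule.span 𝕜 {x} := by
      rintro y ⟨a, rfl⟩
      exact Submodule.smul_mem _ _ (Submodule.mem_span_singleton_self x)
    haveI : FiniteDimensional 𝕜 (Submodule.span 𝕜 ({x} : Set E)) :=
      FiniteDimensional.span_of_finite 𝕜 (finite_singleton x)
    exact Submodule.finiteDimensional_of_le hle
  · intro y hy
    rw [mem_singleton_iff] at hy
    subst hy
    exact ⟨1, rfl, by simp [ContinuousLinearMap.toSpanSingleton_apply]⟩
  · exact (closure_singleton).symm

lemma icpt_image (I : BanachOpClass 𝕜) (hI : IsOperatorIdeal 𝕜 I)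
    {E F : Type u} [NormedAddCommGroup E] [NormedSpace 𝕜 E] [CompleteSpace E]
    [NormedAddCommGroup F] [NormedSpace 𝕜 F] [CompleteSpace F]
    {B : Set E} (hB : B ∈ ICptSets 𝕜 I E) (u : E →L[𝕜] F) :
    ⇑u '' B ∈ ICptSets 𝕜 I F := by
  obtain ⟨w⟩ := hB
  letI := w.iG; letI := w.iS; letI := w.iC
  have hmem : u.comp w.u ∈ I w.F F := by
    have h := hI.comp_mem w.F w.F E F (ContinuousLinearMap.id 𝕜 w.F) w.u u w.hu
    rwa [ContinuousLinearMap.comp_id] at h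
  refine ⟨⟨w.F, w.K, w.hK, u.comp w.u, hmem, ⇑u '' w.A, ?_, ?_⟩⟩
  · rintro y ⟨x, hx, rfl⟩
    obtain ⟨k, hk, hku⟩ := w.hA hx
    exact ⟨k, hk, by simp [hku]⟩
  · -- u '' B = u '' closure w.A = closure (u '' w.A)
    have hBc : IsCompact B := icpt_isCompact (I := I) ⟨w⟩
    have hBcl : B = closure w.A := w.hB
    rw [hBcl] at hBc
    rw [congrArg (⇑u '' ·) hBcl]
    refine Subset.antisymm (image_closure_subset_closure_image u.continuous) ?_
    exact closure_minimal (image_mono subset_closure)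
      (hBc.image u.continuous).isClosed

lemma icpt_cont_conj (I : BanachOpClass 𝕜) (hI : IsOperatorIdeal 𝕜 I)
    {E F G H : Type u}
    [NormedAddCommGroup E] [NormedSpace 𝕜 E] [CompleteSpace E]
    [NormedAddCommGroup F] [NormedSpace 𝕜 F] [CompleteSpace F]
    [NormedAddCommGroup G] [NormedSpace 𝕜 G] [CompleteSpace G]
    [NormedAddCommGroup H] [NormedSpace 𝕜 H] [CompleteSpace H]
    (u : E →L[𝕜] F) (w : G →L[𝕜] H) :
    Continuous[iCptTopology 𝕜 I F G, iCptTopology 𝕜 I E H]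
      (fun v : F →L[𝕜] G => w.comp (v.comp u)) := by
  letI : TopologicalSpace (F →L[𝕜] G) := iCptTopology 𝕜 I F G
  letI : TopologicalSpace (E →L[𝕜] H) := iCptTopology 𝕜 I E H
  have h1 : UniformContinuous fun g : F →ᵤ[ICptSets 𝕜 I F] G =>
      UniformOnFun.ofFun (ICptSets 𝕜 I F) (⇑w ∘ UniformOnFun.toFun (ICptSets 𝕜 I F) g) :=
    UniformOnFun.postcomp_uniformContinuous w.uniformContinuous
  have h2 : UniformContinuous fun g : F →ᵤ[ICptSets 𝕜 I F] H =>
      UniformOnFun.ofFun (ICptSets 𝕜 I E) (UniformOnFun.toFun (ICptSets 𝕜 I F) g ∘ ⇑u) :=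
    UniformOnFun.precomp_uniformContinuous fun t ht => icpt_image I hI ht u
  have hcoe : Continuous fun v : F →L[𝕜] G =>
      UniformOnFun.ofFun (ICptSets 𝕜 I F) ⇑v := continuous_induced_dom
  exact continuous_induced_rng.2 ((h2.continuous.comp h1.continuous).comp hcoe)

lemma icpt_cont_add (I : BanachOpClass 𝕜) {E F : Type u}
    [NormedAddCommGroup E] [NormedSpace 𝕜 E] [CompleteSpace E]
    [NormedAddCommGroup F] [NormedSpace 𝕜 F] [CompleteSpace F] :
    Continuous[instTopologicalSpaceProd (t₁ := iCptTopology 𝕜 I E F)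
        (t₂ := iCptTopology 𝕜 I E F), iCptTopology 𝕜 I E F]
      (fun p : (E →L[𝕜] F) × (E →L[𝕜] F) => p.1 + p.2) := by
  letI : TopologicalSpace (E →L[𝕜] F) := iCptTopology 𝕜 I E F
  have hcoe : Continuous fun v : E →L[𝕜] F =>
      UniformOnFun.ofFun (ICptSets 𝕜 I E) ⇑v := continuous_induced_dom
  have hadd : Continuous fun p : (E →ᵤ[ICptSets 𝕜 I E] F) × (E →ᵤ[ICptSets 𝕜 I E] F) =>
      p.1 + p.2 := continuous_add
  refine continuous_induced_rng.2 ?_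
  have h := hadd.comp ((hcoe.comp continuous_fst).prodMk (hcoe.comp continuous_snd))
  exact h.congr fun p => rfl

end Statement13Aux

/-- I-compact sets are norm compact (in particular bounded), contain the
singletons, and are stable under images of bounded operators; consequently τ_K_I is an
ideal topology. -/
theorem statement13 (I : BanachOpClass 𝕜) (hI : IsOperatorIdeal 𝕜 I) :
    (∀ (E : Type u) [NormedAddCommGroup E] [NormedSpace 𝕜 E] [CompleteSpace E], ∀ B ∈ ICptSets 𝕜 I E, IsCompact B ∧ Bornology.IsBounded B) ∧
    (∀ (E : Type u) [NormedAddCommGroup E] [NormedSpace 𝕜 E] [CompleteSpace E] (x : E), {x} ∈ ICptSets 𝕜 I E) ∧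
    (∀ (E F : Type u) [NormedAddCommGroup E] [NormedSpace 𝕜 E] [CompleteSpace E] [NormedAddCommGroup F] [NormedSpace 𝕜 F] [CompleteSpace F], ∀ B ∈ ICptSets 𝕜 I E,
      ∀ u : E →L[𝕜] F, ⇑u '' B ∈ ICptSets 𝕜 I F) ∧
    (∀ J : BanachOpClass 𝕜, IsOperatorIdeal 𝕜 J →
      IsOperatorIdeal 𝕜 (closureClass 𝕜 (iCptTopology 𝕜 I) J)) := by
  refine ⟨fun E _ _ _ B hB => ⟨icpt_isCompact hB, (icpt_isCompact hB).isBounded⟩,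
    fun E _ _ _ x => icpt_singleton I hI E x,
    fun E F _ _ _ _ _ _ B hB u => icpt_image I hI hB u,
    fun J hJ => ?_⟩
  constructor
  · intro E F _ _ _ _ _ _ a v hv
    letI : TopologicalSpace (E →L[𝕜] F) := iCptTopology 𝕜 I E F
    have hcont : Continuous fun v : E →L[𝕜] F => a • v := by
      have h := icpt_cont_conj I hI (ContinuousLinearMap.id 𝕜 E)
        (a • ContinuousLinearMap.id 𝕜 F)
      exact h.congr fun v => by ext x; simp
    exact map_mem_closure hcont hv fun v2 hv2 => hJ.smul_mem E F a v2 hv2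
  · intro E F _ _ _ _ _ _ v₁ v₂ hv₁ hv₂
    letI : TopologicalSpace (E →L[𝕜] F) := iCptTopology 𝕜 I E F
    exact map_mem_closure₂ (icpt_cont_add I) hv₁ hv₂
      fun a ha b hb => hJ.add_mem E F a b ha hb
  · intro E F _ _ _ _ _ _ v hv
    letI : TopologicalSpace (E →L[𝕜] F) := iCptTopology 𝕜 I E F
    exact subset_closure (hJ.finiteRank_mem E F v hv)
  · intro E F G H _ _ _ _ _ _ _ _ _ _ _ _ u v w hv
    letI : TopologicalSpace (F →L[𝕜] G) := iCptTopology 𝕜 I F G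
    letI : TopologicalSpace (E →L[𝕜] H) := iCptTopology 𝕜 I E H
    exact map_mem_closure (f := fun v2 : F →L[𝕜] G => w.comp (v2.comp u))
      (icpt_cont_conj I hI u w) hv fun v2 hv2 => hJ.comp_mem E F G H u v2 w hv2
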